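/- Let a, b : [0,T] → ℝ with a nonnegative, continuous, and differentiable, a(0) = 0, and suppose a'(t) ≤ 2Kα √(a(t)) + L α² for constants K, L ≥ 0, α > 0. Then √(a(t)) ≤ (K t + √(L t)) α for all t ∈ [0,T]; in particular sup_{[0,T]} √(a) = O(α). -/

import Mathlib

open Set

private theorem stmt_14_aux (T K L α : ℝ) (hT : 0 ≤ T) (hK : 0 ≤ K) (hL : 0 ≤ L) (hα : 0 < α)
    (a : ℝ → ℝ) (ha : ContDiff ℝ 1 a) (ha0 : a 0 = 0)
    (hineq : ∀ t ∈ Icc 0 T, deriv a t ≤ 2 * K * α * Real.sqrt (a t) + L * α ^ 2)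
    (t : ℝ) (ht : t ∈ Icc 0 T) (ht0 : 0 < t) (ε : ℝ) (hε : 0 < ε) :
    Real.sqrt (a t) ≤ (K * t + Real.sqrt ((L + ε) * t)) * α := by
  set c := L + ε with hcdef
  have hc : 0 < c := by positivity
  have hcL : L < c := by simp [hcdef, hε]
  have hdiff : Differentiable ℝ a := ha.differentiable one_ne_zero
  have hderiva : ∀ x : ℝ, HasDerivAt a (deriv a x) x := fun x => (hdiff x).hasDerivAt
  have hcont : Continuous (deriv a) := ha.continuous_deriv le_rfl
  -- deriv a is < c α² near 0
  have h0 : deriv a 0 < c * α ^ 2 := by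
    have := hineq 0 ⟨le_rfl, hT⟩
    rw [ha0, Real.sqrt_zero] at this
    have : deriv a 0 ≤ L * α ^ 2 := by linarith
    nlinarith [sq_nonneg α, mul_pos hε (pow_pos hα 2)]
  have hopen : IsOpen {x : ℝ | deriv a x < c * α ^ 2} := isOpen_lt hcont continuous_const
  obtain ⟨δ, hδ0, hδ⟩ := Metric.isOpen_iff.1 hopen 0 h0
  have hδ' : ∀ x : ℝ, |x| < δ → deriv a x < c * α ^ 2 := by
    intro x hx
    have : x ∈ Metric.ball (0 : ℝ) δ := by
      simpa [Real.dist_eq] using hx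
    exact hδ this
  set s := min (δ / 2) t with hsdef
  have hs0 : 0 < s := lt_min (by linarith) ht0
  have hst : s ≤ t := min_le_right _ _
  have hsδ : s < δ := lt_of_le_of_lt (min_le_left _ _) (by linarith)
  -- Step A : a s ≤ c α² s
  have stepA : a s ≤ c * α ^ 2 * s := by
    have := image_le_of_deriv_right_le_deriv_boundary (f := a) (f' := deriv a)
      (a := 0) (b := s) (B := fun x => c * α ^ 2 * x) (B' := fun _ => c * α ^ 2)
      ha.continuous.continuousOn
      (fun x _ => (hderiva x).hasDerivWithinAt)
      (by simp [ha0])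
      (by fun_prop)
      (fun x _ => by
        simpa using (((hasDerivAt_id x).const_mul (c * α ^ 2)).hasDerivWithinAt))
      (fun x hx => by
        refine le_of_lt (hδ' x ?_)
        rw [abs_of_nonneg hx.1]
        linarith [hx.2])
    exact this (right_mem_Icc.2 hs0.le)
  -- the barrier
  set B : ℝ → ℝ := fun x => ((K * x + Real.sqrt (c * x)) * α) ^ 2 with hBdef
  set B' : ℝ → ℝ := fun x =>
    2 * ((K * x + Real.sqrt (c * x)) * α) ^ 1 * ((K + 1 / (2 * Real.sqrt (c * x)) * c) * α)
    with hB'def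
  have hBderiv : ∀ x : ℝ, 0 < x → HasDerivAt B (B' x) x := by
    intro x hx
    have hcx : (0 : ℝ) < c * x := mul_pos hc hx
    have hsq : HasDerivAt (fun y => Real.sqrt (c * y)) (1 / (2 * Real.sqrt (c * x)) * c) x := by
      have h1 : HasDerivAt (fun y : ℝ => c * y) c x := by
        simpa using (hasDerivAt_id x).const_mul c
      exact (Real.hasDerivAt_sqrt hcx.ne').comp x h1
    have hg : HasDerivAt (fun y => K * y + Real.sqrt (c * y))
        (K + 1 / (2 * Real.sqrt (c * x)) * c) x := by
      have h2 : HasDerivAt (fun y : ℝ => K * y) K x := by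
        simpa using (hasDerivAt_id x).const_mul K
      exact h2.add hsq
    simpa [hBdef, hB'def] using ((hg.mul_const α).fun_pow 2)
  have hBcont : Continuous B := by
    apply Continuous.pow
    exact ((continuous_const.mul continuous_id).add
      (Real.continuous_sqrt.comp (continuous_const.mul continuous_id))).mul continuous_const
  -- initial condition : a s ≤ B s
  have hinit : a s ≤ B s := by
    have hq : Real.sqrt (c * s) ^ 2 = c * s := Real.sq_sqrt (mul_pos hc hs0).le
    have hq0 : 0 ≤ Real.sqrt (c * s) := Real.sqrt_nonneg _
    have hKs : 0 ≤ K * s := mul_nonneg hK hs0.le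
    have : c * α ^ 2 * s ≤ B s := by
      simp only [hBdef]
      nlinarith [sq_nonneg α, sq_nonneg (K * s), mul_nonneg hKs hq0]
    linarith [stepA]
  -- Gronwall comparison on [s, t]
  have main : a t ≤ B t := by
    refine image_le_of_deriv_right_lt_deriv_boundary' (f := a) (f' := deriv a)
      (a := s) (b := t) (B := B) (B' := B')
      ha.continuous.continuousOn
      (fun x _ => (hderiva x).hasDerivWithinAt)
      hinit
      hBcont.continuousOn
      (fun x hx => (hBderiv x (lt_of_lt_of_le hs0 hx.1)).hasDerivWithinAt)
      ?_ (right_mem_Icc.2 hst)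
    intro x hx heq
    have hx0 : 0 < x := lt_of_lt_of_le hs0 hx.1
    have hxT : x ∈ Icc (0 : ℝ) T := ⟨hx0.le, le_trans hx.2.le ht.2⟩
    have hq0 : 0 < Real.sqrt (c * x) := Real.sqrt_pos.2 (mul_pos hc hx0)
    set q := Real.sqrt (c * x) with hqdef
    have hqq : q ^ 2 = c * x := Real.sq_sqrt (mul_pos hc hx0).le
    have hnn : 0 ≤ (K * x + q) * α :=
      mul_nonneg (add_nonneg (mul_nonneg hK hx0.le) hq0.le) hα.le
    have hsqrtB : Real.sqrt (a x) = (K * x + q) * α := by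
      rw [heq]
      exact Real.sqrt_sq hnn
    have h1 := hineq x hxT
    rw [hsqrtB] at h1
    have hB'eq : B' x = 2 * K * ((K * x + q)) * α ^ 2 + ((K * x) * c / q + c) * α ^ 2 := by
      simp only [hB'def, pow_one, ← hqdef]
      field_simp
    rw [hB'eq]
    have hpos1 : 0 ≤ K * x * c / q := by positivity
    nlinarith [mul_pos hε (pow_pos hα 2), mul_nonneg hpos1 (sq_nonneg α)]
  -- conclude
  calc Real.sqrt (a t) ≤ Real.sqrt (B t) := Real.sqrt_le_sqrt main
    _ = (K * t + Real.sqrt (c * t)) * α := by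
        apply Real.sqrt_sq
        exact mul_nonneg (add_nonneg (mul_nonneg hK ht0.le) (Real.sqrt_nonneg _)) hα.le

theorem stmt_14 (T K L α : ℝ) (hT : 0 ≤ T) (hK : 0 ≤ K) (hL : 0 ≤ L) (hα : 0 < α)
    (a : ℝ → ℝ) (ha : ContDiff ℝ 1 a) (ha0 : a 0 = 0)
    (hpos : ∀ t ∈ Icc 0 T, 0 ≤ a t)
    (hineq : ∀ t ∈ Icc 0 T, deriv a t ≤ 2 * K * α * Real.sqrt (a t) + L * α ^ 2) :
    ∀ t ∈ Icc 0 T, Real.sqrt (a t) ≤ (K * t + Real.sqrt (L * t)) * α := by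
  intro t ht
  rcases eq_or_lt_of_le ht.1 with h0 | ht0
  · simp [← h0, ha0]
  · have key : ∀ ε : ℝ, 0 < ε →
        Real.sqrt (a t) ≤ (K * t + Real.sqrt ((L + ε) * t)) * α :=
      fun ε hε => stmt_14_aux T K L α hT hK hL hα a ha ha0 hineq t ht ht0 ε hε
    have hcont : Continuous fun ε : ℝ => (K * t + Real.sqrt ((L + ε) * t)) * α := by
      apply Continuous.mul _ continuous_const
      exact continuous_const.add
        (Real.continuous_sqrt.comp ((continuous_const.add continuous_id).mul continuous_const))
    have htend : Filter.Tendsto (fun ε : ℝ => (K * t + Real.sqrt ((L + ε) * t)) * α)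
        (nhdsWithin 0 (Ioi 0)) (nhds ((K * t + Real.sqrt (L * t)) * α)) := by
      have := hcont.tendsto 0
      simp only [add_zero] at this
      exact this.mono_left nhdsWithin_le_nhds
    refine ge_of_tendsto htend ?_
    filter_upwards [self_mem_nhdsWithin] with ε hε
    exact key ε hε
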